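/- In the monoid M = IOF_n^par, for all a, b ∈ M: (1) a L b if and only if im(a) = im(b); (2) a R b if and only if dom(a) = dom(b); (3) a H b if and only if a = b. -/

import Mathlib

namespace IOFpar

/-- A partial injection on the chain `{1, …, n}`: a partial function with domain and
image contained in `{1, …, n}` that is injective where defined. -/
structure PInj (n : ℕ) where
  f : ℕ → Option ℕ
  mem_bounds : ∀ ⦃x y : ℕ⦄, f x = some y → x ∈ Finset.Icc 1 n ∧ y ∈ Finset.Icc 1 n
  inj : ∀ ⦃x₁ x₂ y : ℕ⦄, f x₁ = some y → f x₂ = some y → x₁ = x₂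

/-- The domain of a partial injection. -/
def PInj.dom {n : ℕ} (α : PInj n) : Finset ℕ :=
  (Finset.Icc 1 n).filter fun x => (α.f x).isSome

open Classical in
/-- The image of a partial injection. -/
noncomputable def PInj.im {n : ℕ} (α : PInj n) : Finset ℕ :=
  (Finset.Icc 1 n).filter fun y => ∃ x, α.f x = some y

/-- The rank of a partial injection: the size of its domain. -/
def PInj.rank {n : ℕ} (α : PInj n) : ℕ := α.dom.card

/-- The value of `α` at `x` (with junk value `0` outside the domain). -/
def PInj.app {n : ℕ} (α : PInj n) (x : ℕ) : ℕ := (α.f x).getD 0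

/-- Composition of partial injections: `α.comp β` applies `α` first, then `β`
(so it corresponds to the product `αβ` with arguments written on the left). -/
def PInj.comp {n : ℕ} (α β : PInj n) : PInj n where
  f x := (α.f x).bind β.f
  mem_bounds := by
    intro x y h
    rcases Option.bind_eq_some_iff.mp h with ⟨z, hz, hzy⟩
    exact ⟨(α.mem_bounds hz).1, (β.mem_bounds hzy).2⟩
  inj := by
    intro x₁ x₂ y h₁ h₂
    rcases Option.bind_eq_some_iff.mp h₁ with ⟨z₁, hz₁, hz₁y⟩
    rcases Option.bind_eq_some_iff.mp h₂ with ⟨z₂, hz₂, hz₂y⟩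
    obtain rfl : z₁ = z₂ := β.inj hz₁y hz₂y
    exact α.inj hz₁ hz₂

/-- The empty transformation `ε`. -/
def epsilon (n : ℕ) : PInj n where
  f _ := none
  mem_bounds := by intro x y h; simp at h
  inj := by intro x₁ x₂ y h; simp at h

/-- The fence (zig-zag) order on `{1, …, n}`: `k ≺ m` iff `|k - m| = 1`, `k` is odd
and `m` is even. -/
def fence (k m : ℕ) : Prop := (m = k + 1 ∨ k = m + 1) ∧ Odd k ∧ Even m

/-- `IOF n` is the set `IOF_n^par` of all partial injections on `{1, …, n}` that are
order-preserving, parity-preserving, fence-preserving, and whose inverse is also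
fence-preserving. -/
def IOF (n : ℕ) : Set (PInj n) :=
  {α | (∀ ⦃x y x' y' : ℕ⦄, α.f x = some x' → α.f y = some y' → x < y → x' < y') ∧
       (∀ ⦃x y : ℕ⦄, α.f x = some y → x % 2 = y % 2) ∧
       (∀ ⦃x y x' y' : ℕ⦄, α.f x = some x' → α.f y = some y' → fence x y → fence x' y') ∧
       (∀ ⦃x y x' y' : ℕ⦄, α.f x = some x' → α.f y = some y' → fence x' y' → fence x y)}

/-- The increasing enumeration of a finite set of naturals. -/
def sortedList (A : Finset ℕ) : List ℕ := A.sort (· ≤ ·)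

/-- The relation `∼` on subsets of `{1, …, n}`:
`A ∼ B` iff `|A| = |B|`, corresponding elements (in increasing order) have the
same parity, and consecutive elements are at distance 1 in `A` iff they are in `B`. -/
def sim (A B : Finset ℕ) : Prop :=
  A.card = B.card ∧
  (∀ (r : ℕ) (hA : r < (sortedList A).length) (hB : r < (sortedList B).length),
    (sortedList A)[r] % 2 = (sortedList B)[r] % 2) ∧
  (∀ (r : ℕ) (hA : r + 1 < (sortedList A).length) (hB : r + 1 < (sortedList B).length),
    ((sortedList A)[r + 1] = (sortedList A)[r] + 1 ↔
      (sortedList B)[r + 1] = (sortedList B)[r] + 1))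

/-- `P ⊆ P(n̄)` is admissible: it contains `∅`, is convex, and is closed under `∼`. -/
def Admissible (n : ℕ) (P : Set (Finset ℕ)) : Prop :=
  (∀ A ∈ P, A ⊆ Finset.Icc 1 n) ∧
  (∅ : Finset ℕ) ∈ P ∧
  (∀ A ∈ P, ∀ B ∈ P, ∀ C : Finset ℕ, A ⊆ C → C ⊆ B → C ∈ P) ∧
  (∀ y ∈ P, ∀ z : Finset ℕ, z ⊆ Finset.Icc 1 n → sim z y → z ∈ P)

/-- `I_X = {α ∈ IOF_n^par : dom(α) ∈ X}`. -/
def IX (n : ℕ) (X : Set (Finset ℕ)) : Set (PInj n) :=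
  {α | α ∈ IOF n ∧ α.dom ∈ X}

/-- An ideal of the monoid `IOF_n^par`. -/
def IsIdeal (n : ℕ) (I : Set (PInj n)) : Prop :=
  I.Nonempty ∧ I ⊆ IOF n ∧ ∀ a ∈ I, ∀ b ∈ IOF n, a.comp b ∈ I ∧ b.comp a ∈ I

/-- `del y t` is `y^[t+1]` in the paper's (1-based) notation: `y` with its `t`-th
smallest element removed (`t` being 0-based here). -/
def del (y : Finset ℕ) (t : ℕ) : Finset ℕ := y.erase ((sortedList y).getD t 0)

/-- `x ⊑ y`: `x` is obtained from `y` by removing one element. -/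
def sqsub (x y : Finset ℕ) : Prop := ∃ t < y.card, x = del y t

/-- `A_Γ = {Δ ∈ P : Δ ∼ Γ}`. -/
def Aset (P : Set (Finset ℕ)) (Γ : Finset ℕ) : Set (Finset ℕ) :=
  {Δ ∈ P | sim Δ Γ}

/-- `B_Γ = {Δ^[t] : Δ ∈ A_Γ, t ∈ {1,…,|Δ|}}`. -/
def Bset (P : Set (Finset ℕ)) (Γ : Finset ℕ) : Set (Finset ℕ) :=
  {D | ∃ Δ ∈ Aset P Γ, ∃ t < Δ.card, D = del Δ t}

/-- `B = {B_Γ : Γ ∈ P, |Γ| ≥ 2, |A_Γ| ≥ 2}`. -/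
def Bfam (P : Set (Finset ℕ)) : Set (Set (Finset ℕ)) :=
  {E | ∃ Γ ∈ P, 2 ≤ Γ.card ∧ 2 ≤ (Aset P Γ).ncard ∧ E = Bset P Γ}

/-- `C = {{g} : g ∈ P, (g ⊑ y for some y ∈ P with y ≁ z for all z ∈ P \ {y}) or
(g ⋢ z for all z ∈ P)}`. -/
def Cfam (P : Set (Finset ℕ)) : Set (Set (Finset ℕ)) :=
  {D | ∃ g ∈ P, D = {g} ∧
    ((∃ y ∈ P, sqsub g y ∧ ∀ z ∈ P, z ≠ y → ¬ sim y z) ∨ (∀ z ∈ P, ¬ sqsub g z))}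

/-- `BC_{Δ₁} = {Δ ∈ B ∪ C : x ∼ y for all x ∈ Δ, y ∈ Δ₁}`. -/
def BCset (P : Set (Finset ℕ)) (Δ₁ : Set (Finset ℕ)) : Set (Set (Finset ℕ)) :=
  {Δ ∈ Bfam P ∪ Cfam P | ∀ x ∈ Δ, ∀ y ∈ Δ₁, sim x y}

/-- `T_Δ = {c ∈ I_P : dom(c) ∈ Δ, im(c) ∈ Δ}`. -/
def Tset (n : ℕ) (P : Set (Finset ℕ)) (Δ : Set (Finset ℕ)) : Set (PInj n) :=
  {c ∈ IX n P | c.dom ∈ Δ ∧ c.im ∈ Δ}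

/-- `T_Q` for a pair `Q = (Q₁, Q₂)`. -/
def TQ (n : ℕ) (P : Set (Finset ℕ)) (Q₁ Q₂ : Set (Set (Finset ℕ))) : Set (PInj n) :=
  {c ∈ IX n P | (∃ Δ ∈ Q₁, c.dom ∈ Δ) ∧ (∃ Δ ∈ Q₂, c.im ∈ Δ)}

/-- `I_P^u`: the elements of `I_P` that are not expressible in the special product form. -/
def Iu (n : ℕ) (P : Set (Finset ℕ)) : Set (PInj n) :=
  {α ∈ IX n P | ¬ ∃ y₁ ∈ P, ∃ z₁ ∈ P, ∃ y₂ ∈ P, ∃ z₂ ∈ P, ∃ r < y₁.card, ∃ s < y₁.card,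
    y₁.card = z₁.card ∧ 2 ≤ y₁.card ∧
    sim y₂ y₁ ∧ sim z₂ z₁ ∧
    del y₁ r = y₁ ∩ z₁ ∧ del z₁ s = y₁ ∩ z₁ ∧
    sim (del y₂ r) (del z₂ s) ∧ sim (del z₂ s) (y₁ ∩ z₁) ∧
    α.dom = del y₂ r ∧ α.im = del z₂ s}

/-- `T` is a subsemigroup of `S` (a subset of `S` closed under composition). -/
def IsSubsemigroup (n : ℕ) (S T : Set (PInj n)) : Prop :=
  T ⊆ S ∧ ∀ a ∈ T, ∀ b ∈ T, a.comp b ∈ T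

/-- `T` is a maximal subsemigroup of `S`. -/
def IsMaxSubsemigroup (n : ℕ) (S T : Set (PInj n)) : Prop :=
  IsSubsemigroup n S T ∧ T ≠ S ∧
  ∀ U : Set (PInj n), IsSubsemigroup n S U → T ⊆ U → U ⊆ S → U = T ∨ U = S

/-- The left "translate set" `Ma` in the monoid `M = IOF_n^par`. -/
def lset (n : ℕ) (a : PInj n) : Set (PInj n) := {c | ∃ m ∈ IOF n, m.comp a = c}

/-- The right "translate set" `aM` in the monoid `M = IOF_n^par`. -/
def rset (n : ℕ) (a : PInj n) : Set (PInj n) := {c | ∃ m ∈ IOF n, a.comp m = c}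

/-- The two-sided "translate set" `MaM` in the monoid `M = IOF_n^par`. -/
def jset (n : ℕ) (a : PInj n) : Set (PInj n) :=
  {c | ∃ m₁ ∈ IOF n, ∃ m₂ ∈ IOF n, (m₁.comp a).comp m₂ = c}


section Aux

variable {n : ℕ}

lemma PInj.ext' {a b : PInj n} (h : a.f = b.f) : a = b := by
  cases a; cases b; simpa using h

lemma PInj.mem_dom {α : PInj n} {x : ℕ} : x ∈ α.dom ↔ (α.f x).isSome := by
  unfold PInj.dom
  simp only [Finset.mem_filter, and_iff_right_iff_imp]
  intro h
  obtain ⟨y, hy⟩ := Option.isSome_iff_exists.mp h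
  exact (α.mem_bounds hy).1

lemma PInj.mem_im {α : PInj n} {y : ℕ} : y ∈ α.im ↔ ∃ x, α.f x = some y := by
  classical
  unfold PInj.im
  simp only [Finset.mem_filter, and_iff_right_iff_imp]
  rintro ⟨x, hx⟩
  exact (α.mem_bounds hx).2

lemma PInj.comp_f (α β : PInj n) (x : ℕ) : (α.comp β).f x = (α.f x).bind β.f := rfl

lemma PInj.comp_assoc (α β γ : PInj n) : (α.comp β).comp γ = α.comp (β.comp γ) := by
  apply PInj.ext'
  funext x
  simp only [PInj.comp_f]
  cases α.f x <;> simp [PInj.comp_f]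

/-- The identity on `{1,…,n}`. -/
def idP (n : ℕ) : PInj n where
  f x := if x ∈ Finset.Icc 1 n then some x else none
  mem_bounds := by
    intro x y h
    split at h
    · next hx => cases h; exact ⟨hx, hx⟩
    · simp at h
  inj := by
    intro x₁ x₂ y h₁ h₂
    split at h₁ <;> split at h₂ <;> simp_all

lemma idP_f_eq_some {x y : ℕ} (h : (idP n).f x = some y) : y = x ∧ x ∈ Finset.Icc 1 n := by
  unfold idP at h
  dsimp only at h
  split at h
  · next hx => cases h; exact ⟨rfl, hx⟩
  · simp at h

lemma idP_mem : idP n ∈ IOF n := by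
  refine ⟨?_, ?_, ?_, ?_⟩
  · intro x y x' y' hx hy hlt
    obtain ⟨rfl, -⟩ := idP_f_eq_some hx
    obtain ⟨rfl, -⟩ := idP_f_eq_some hy
    exact hlt
  · intro x y hx
    obtain ⟨rfl, -⟩ := idP_f_eq_some hx
    rfl
  · intro x y x' y' hx hy hf
    obtain ⟨rfl, -⟩ := idP_f_eq_some hx
    obtain ⟨rfl, -⟩ := idP_f_eq_some hy
    exact hf
  · intro x y x' y' hx hy hf
    obtain ⟨rfl, -⟩ := idP_f_eq_some hx
    obtain ⟨rfl, -⟩ := idP_f_eq_some hy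
    exact hf

lemma idP_comp (a : PInj n) : (idP n).comp a = a := by
  apply PInj.ext'
  funext x
  simp only [PInj.comp_f]
  by_cases hx : x ∈ Finset.Icc 1 n
  · obtain ⟨h1, h2⟩ := Finset.mem_Icc.mp hx
    simp [idP, hx, h1, h2]
  · have : a.f x = none := by
      cases h : a.f x with
      | none => rfl
      | some y => exact absurd (a.mem_bounds h).1 hx
    simp [idP, hx, this]

lemma IOF_comp {a b : PInj n} (ha : a ∈ IOF n) (hb : b ∈ IOF n) : a.comp b ∈ IOF n := by
  obtain ⟨ha1, ha2, ha3, ha4⟩ := ha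
  obtain ⟨hb1, hb2, hb3, hb4⟩ := hb
  refine ⟨?_, ?_, ?_, ?_⟩
  · intro x y x' y' hx hy hlt
    obtain ⟨z₁, hz₁, hz₁'⟩ := Option.bind_eq_some_iff.mp hx
    obtain ⟨z₂, hz₂, hz₂'⟩ := Option.bind_eq_some_iff.mp hy
    exact hb1 hz₁' hz₂' (ha1 hz₁ hz₂ hlt)
  · intro x y hx
    obtain ⟨z, hz, hz'⟩ := Option.bind_eq_some_iff.mp hx
    exact (ha2 hz).trans (hb2 hz')
  · intro x y x' y' hx hy hf
    obtain ⟨z₁, hz₁, hz₁'⟩ := Option.bind_eq_some_iff.mp hx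
    obtain ⟨z₂, hz₂, hz₂'⟩ := Option.bind_eq_some_iff.mp hy
    exact hb3 hz₁' hz₂' (ha3 hz₁ hz₂ hf)
  · intro x y x' y' hx hy hf
    obtain ⟨z₁, hz₁, hz₁'⟩ := Option.bind_eq_some_iff.mp hx
    obtain ⟨z₂, hz₂, hz₂'⟩ := Option.bind_eq_some_iff.mp hy
    exact ha4 hz₁ hz₂ (hb4 hz₁' hz₂' hf)

open Classical in
/-- The inverse partial injection. -/
noncomputable def PInj.inv (α : PInj n) : PInj n where
  f y := if h : ∃ x, α.f x = some y then some h.choose else none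
  mem_bounds := by
    intro y x h
    split at h
    · next hex =>
      cases h
      exact ⟨(α.mem_bounds hex.choose_spec).2, (α.mem_bounds hex.choose_spec).1⟩
    · simp at h
  inj := by
    intro y₁ y₂ x h₁ h₂
    split at h₁
    · next hex₁ =>
      split at h₂
      · next hex₂ =>
        have e₁ : hex₁.choose = x := Option.some.inj h₁
        have e₂ : hex₂.choose = x := Option.some.inj h₂
        have s₁ := hex₁.choose_spec
        have s₂ := hex₂.choose_spec
        rw [e₁] at s₁
        rw [e₂] at s₂
        exact Option.some.inj (s₁.symm.trans s₂)
      · simp at h₂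
    · simp at h₁

lemma PInj.inv_spec {α : PInj n} {x y : ℕ} : α.inv.f y = some x ↔ α.f x = some y := by
  classical
  constructor
  · intro h
    unfold PInj.inv at h
    dsimp only at h
    split at h
    · next hex => cases h; exact hex.choose_spec
    · simp at h
  · intro h
    have hex : ∃ x', α.f x' = some y := ⟨x, h⟩
    have : α.inv.f y = some hex.choose := by simp [PInj.inv, hex]
    rw [this, α.inj hex.choose_spec h]

lemma inv_mem {α : PInj n} (hα : α ∈ IOF n) : α.inv ∈ IOF n := by
  obtain ⟨h1, h2, h3, h4⟩ := hα
  refine ⟨?_, ?_, ?_, ?_⟩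
  · intro x y x' y' hx hy hlt
    rw [PInj.inv_spec] at hx hy
    rcases lt_trichotomy x' y' with h | h | h
    · exact h
    · subst h; rw [hx] at hy; cases hy; omega
    · exact absurd (h1 hy hx h) (by omega)
  · intro x y hx
    rw [PInj.inv_spec] at hx
    exact (h2 hx).symm
  · intro x y x' y' hx hy hf
    rw [PInj.inv_spec] at hx hy
    exact h4 hx hy hf
  · intro x y x' y' hx hy hf
    rw [PInj.inv_spec] at hx hy
    exact h3 hx hy hf

/-- Uniqueness: an order-preserving partial injection is determined by dom and im. -/
lemma aux_false {a b : PInj n}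
    (hao : ∀ ⦃x y x' y' : ℕ⦄, a.f x = some x' → a.f y = some y' → x < y → x' < y')
    {x y y' : ℕ} (hy : a.f x = some y) (hy' : b.f x = some y') (hlt : y < y')
    (him : ∃ x₂, a.f x₂ = some y')
    (hmax : ∀ z, a.f z ≠ b.f z → z ≤ x) : False := by
  obtain ⟨x₂, h2⟩ := him
  have hx2 : x < x₂ := by
    rcases lt_trichotomy x x₂ with h | h | h
    · exact h
    · subst h; rw [hy] at h2; cases h2; omega
    · exact absurd (hao h2 hy h) (by omega)
  have heq : a.f x₂ = b.f x₂ := by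
    by_contra h
    exact absurd (hmax _ h) (not_le.mpr hx2)
  have hb2 : b.f x₂ = some y' := heq ▸ h2
  have := b.inj hb2 hy'
  omega

lemma eq_of_dom_im {a b : PInj n}
    (hao : ∀ ⦃x y x' y' : ℕ⦄, a.f x = some x' → a.f y = some y' → x < y → x' < y')
    (hbo : ∀ ⦃x y x' y' : ℕ⦄, b.f x = some x' → b.f y = some y' → x < y → x' < y')
    (hd : a.dom = b.dom) (hi : a.im = b.im) : a = b := by
  classical
  have hdom : ∀ x, (a.f x).isSome ↔ (b.f x).isSome := by
    intro x
    rw [← PInj.mem_dom, ← PInj.mem_dom, hd]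
  have hima : ∀ y, (∃ x, a.f x = some y) → ∃ x, b.f x = some y := by
    intro y h
    rw [← PInj.mem_im, ← hi, PInj.mem_im]; exact h
  have himb : ∀ y, (∃ x, b.f x = some y) → ∃ x, a.f x = some y := by
    intro y h
    rw [← PInj.mem_im, hi, PInj.mem_im]; exact h
  have key : ∀ x, a.f x = b.f x := by
    by_contra hcon
    push_neg at hcon
    obtain ⟨x0, hx0⟩ := hcon
    set S : Finset ℕ := (Finset.Icc 1 n).filter (fun x => a.f x ≠ b.f x) with hS
    have memS : ∀ z, a.f z ≠ b.f z → z ∈ S := by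
      intro z hz
      refine Finset.mem_filter.mpr ⟨?_, hz⟩
      cases h : a.f z with
      | some w => exact (a.mem_bounds h).1
      | none =>
        cases h' : b.f z with
        | some w => exact (b.mem_bounds h').1
        | none => exact absurd (h.trans h'.symm) hz
    have hne : S.Nonempty := ⟨x0, memS x0 hx0⟩
    set x := S.max' hne with hxdef
    have hxS : x ∈ S := S.max'_mem hne
    have hxne : a.f x ≠ b.f x := (Finset.mem_filter.mp hxS).2
    have hmax : ∀ z, a.f z ≠ b.f z → z ≤ x := fun z hz => S.le_max' z (memS z hz)
    obtain ⟨y, hy⟩ : ∃ y, a.f x = some y := by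
      cases h : a.f x with
      | some w => exact ⟨w, rfl⟩
      | none =>
        cases h' : b.f x with
        | none => exact absurd (h.trans h'.symm) hxne
        | some w =>
          have : (a.f x).isSome := (hdom x).mpr (by simp [h'])
          rw [h] at this; simp at this
    obtain ⟨y', hy'⟩ : ∃ y', b.f x = some y' := by
      have : (b.f x).isSome := (hdom x).mp (by simp [hy])
      exact Option.isSome_iff_exists.mp this
    rcases lt_trichotomy y y' with h | h | h
    · exact aux_false hao hy hy' h (himb y' ⟨x, hy'⟩) hmax
    · subst h; exact hxne (hy.trans hy'.symm)
    · exact aux_false hbo hy' hy h (hima y ⟨x, hy⟩) (fun z hz => hmax z (Ne.symm hz))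
  exact PInj.ext' (funext key)

lemma lset_subset {a b : PInj n} (h : ∃ m ∈ IOF n, m.comp b = a) :
    lset n a ⊆ lset n b := by
  obtain ⟨m, hm, rfl⟩ := h
  rintro c ⟨m', hm', rfl⟩
  exact ⟨m'.comp m, IOF_comp hm' hm, (PInj.comp_assoc _ _ _)⟩

lemma rset_subset {a b : PInj n} (h : ∃ m ∈ IOF n, b.comp m = a) :
    rset n a ⊆ rset n b := by
  obtain ⟨m, hm, rfl⟩ := h
  rintro c ⟨m', hm', rfl⟩
  exact ⟨m.comp m', IOF_comp hm hm', (PInj.comp_assoc _ _ _).symm⟩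

lemma self_mem_lset (a : PInj n) : a ∈ lset n a := ⟨idP n, idP_mem, idP_comp a⟩

lemma comp_idP (a : PInj n) : a.comp (idP n) = a := by
  apply PInj.ext'
  funext x
  simp only [PInj.comp_f]
  cases h : a.f x with
  | none => rfl
  | some y =>
    obtain ⟨h1, h2⟩ := Finset.mem_Icc.mp (a.mem_bounds h).2
    simp [idP, h1, h2]

lemma self_mem_rset (a : PInj n) : a ∈ rset n a := ⟨idP n, idP_mem, comp_idP a⟩

lemma im_subset_of_factor {a b m : PInj n} (h : m.comp b = a) : a.im ⊆ b.im := by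
  intro y hy
  rw [PInj.mem_im] at hy ⊢
  obtain ⟨x, hx⟩ := hy
  rw [← h, PInj.comp_f] at hx
  obtain ⟨z, hz, hz'⟩ := Option.bind_eq_some_iff.mp hx
  exact ⟨z, hz'⟩

lemma dom_subset_of_factor {a b m : PInj n} (h : b.comp m = a) : a.dom ⊆ b.dom := by
  intro x hx
  rw [PInj.mem_dom] at hx ⊢
  obtain ⟨y, hy⟩ := Option.isSome_iff_exists.mp hx
  rw [← h, PInj.comp_f] at hy
  obtain ⟨z, hz, hz'⟩ := Option.bind_eq_some_iff.mp hy
  simp [hz]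

lemma factor_of_im_eq {a b : PInj n} (ha : a ∈ IOF n) (hb : b ∈ IOF n) (hi : a.im = b.im) :
    ∃ m ∈ IOF n, m.comp b = a := by
  refine ⟨a.comp b.inv, IOF_comp ha (inv_mem hb), ?_⟩
  apply PInj.ext'
  funext x
  rw [PInj.comp_f, PInj.comp_f]
  cases h : a.f x with
  | none => rfl
  | some y =>
    have hy : y ∈ b.im := hi ▸ PInj.mem_im.mpr ⟨x, h⟩
    obtain ⟨x₂, hx₂⟩ := PInj.mem_im.mp hy
    have : b.inv.f y = some x₂ := PInj.inv_spec.mpr hx₂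
    simp [this, hx₂]

lemma factor_of_dom_eq {a b : PInj n} (ha : a ∈ IOF n) (hb : b ∈ IOF n) (hd : a.dom = b.dom) :
    ∃ m ∈ IOF n, b.comp m = a := by
  refine ⟨b.inv.comp a, IOF_comp (inv_mem hb) ha, ?_⟩
  apply PInj.ext'
  funext x
  rw [PInj.comp_f]
  cases h : b.f x with
  | none =>
    have : x ∉ b.dom := by rw [PInj.mem_dom, h]; simp
    rw [← hd, PInj.mem_dom] at this
    cases h' : a.f x with
    | none => rfl
    | some y => rw [h'] at this; simp at this
  | some z =>
    have : b.inv.f z = some x := PInj.inv_spec.mpr h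
    simp [PInj.comp_f, this]

end Aux
/-- Green's relations `L`, `R`, `H` on the monoid `M = IOF_n^par`:
`a L b` iff `im(a) = im(b)`; `a R b` iff `dom(a) = dom(b)`; `a H b` iff `a = b`. -/
theorem statement_5 (n : ℕ) (hn : 0 < n) (a b : PInj n)
    (ha : a ∈ IOF n) (hb : b ∈ IOF n) :
    (lset n a = lset n b ↔ a.im = b.im) ∧
    (rset n a = rset n b ↔ a.dom = b.dom) ∧
    ((lset n a = lset n b ∧ rset n a = rset n b) ↔ a = b) := by
  have hL : lset n a = lset n b ↔ a.im = b.im := by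
    constructor
    · intro h
      have hab : a ∈ lset n b := h ▸ self_mem_lset a
      have hba : b ∈ lset n a := h.symm ▸ self_mem_lset b
      obtain ⟨m, hm, hmeq⟩ := hab
      obtain ⟨m', hm', hmeq'⟩ := hba
      exact le_antisymm (im_subset_of_factor hmeq) (im_subset_of_factor hmeq')
    · intro h
      exact le_antisymm (lset_subset (factor_of_im_eq ha hb h))
        (lset_subset (factor_of_im_eq hb ha h.symm))
  have hR : rset n a = rset n b ↔ a.dom = b.dom := by
    constructor
    · intro h
      have hab : a ∈ rset n b := h ▸ self_mem_rset a
      have hba : b ∈ rset n a := h.symm ▸ self_mem_rset b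
      obtain ⟨m, hm, hmeq⟩ := hab
      obtain ⟨m', hm', hmeq'⟩ := hba
      exact le_antisymm (dom_subset_of_factor hmeq) (dom_subset_of_factor hmeq')
    · intro h
      exact le_antisymm (rset_subset (factor_of_dom_eq ha hb h))
        (rset_subset (factor_of_dom_eq hb ha h.symm))
  refine ⟨hL, hR, ?_⟩
  constructor
  · rintro ⟨hl, hr⟩
    exact eq_of_dom_im ha.1 hb.1 (hR.mp hr) (hL.mp hl)
  · rintro rfl
    exact ⟨rfl, rfl⟩

end IOFpar
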